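/- For n = 2k+1 teams (n ≥ 3), in any schedule with guaranteed rest time k-1, every game after position k is played between the unique team not appearing in the previous k games and one of the two teams that played exactly k games earlier. -/

import Mathlib

/-- `f` lists the games of a single round-robin tournament on `n` teams:
positions `0, ..., N-1` are in bijection with the unordered pairs of distinct teams. -/
def isSchedule (n N : ℕ) (f : ℕ → Sym2 (Fin n)) : Prop :=
  (∀ i, i < N → ¬ (f i).IsDiag) ∧
  ∀ p : Sym2 (Fin n), ¬ p.IsDiag → ∃! i, i < N ∧ f i = p

/-- The schedule has guaranteed rest time at least `b`: any two games involving a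
common team `t` are separated by at least `b` games not involving `t`. -/
def hasRest (n N : ℕ) (f : ℕ → Sym2 (Fin n)) (b : ℕ) : Prop :=
  ∀ t : Fin n, ∀ i j, i < j → j < N → t ∈ f i → t ∈ f j →
    b ≤ ((Finset.Ioo i j).filter (fun l => t ∉ f l)).card

/-- Number of games played by team `t` in the first `m` games. -/
def played (n : ℕ) (f : ℕ → Sym2 (Fin n)) (t : Fin n) (m : ℕ) : ℕ :=
  ((Finset.range m).filter (fun i => t ∈ f i)).card

/-- The games-played difference index is at most `p`. -/
def gpLe (n N : ℕ) (f : ℕ → Sym2 (Fin n)) (p : ℕ) : Prop :=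
  ∀ m, m ≤ N → ∀ t1 t2 : Fin n, played n f t1 m ≤ played n f t2 m + p

/-- The rest of team `t` going into the game at position `i`: the number of games since
`t`'s previous game, where all teams play an imaginary game one slot before game `0`. -/
def rest (n : ℕ) (f : ℕ → Sym2 (Fin n)) (t : Fin n) (i : ℕ) : ℕ :=
  ((Finset.range i).filter (fun j => ∀ l, j ≤ l → l < i → t ∉ f l)).card

/-- The rest difference index is at most `d`. -/
def rdLe (n N : ℕ) (f : ℕ → Sym2 (Fin n)) (d : ℕ) : Prop :=
  ∀ i, i < N → ∀ t1 t2 : Fin n, t1 ∈ f i → t2 ∈ f i →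
    rest n f t1 i ≤ rest n f t2 i + d


lemma mem_card_two {n : ℕ} (p : Sym2 (Fin n)) (hp : ¬ p.IsDiag) :
    (Finset.univ.filter (fun t => t ∈ p)).card = 2 := by
  induction p using Sym2.inductionOn with
  | hf x y =>
    rw [Sym2.mk_isDiag_iff] at hp
    have h : (Finset.univ.filter (fun t => t ∈ s(x, y))) = {x, y} := by
      ext t; simp [Sym2.mem_iff]
    rw [h]
    rw [Finset.card_insert_of_notMem (by simpa using hp), Finset.card_singleton]

lemma sym2_exists {α : Type*} (p : Sym2 α) : ∃ x y, p = s(x, y) :=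
  Sym2.inductionOn p (fun x y => ⟨x, y, rfl⟩)

lemma window_disjoint {k n N : ℕ} (hk : 1 ≤ k) (f : ℕ → Sym2 (Fin n))
    (hrest : hasRest n N f (k-1)) {a j1 j2 : ℕ} (hN : a + k ≤ N)
    (h1 : a ≤ j1) (h12 : j1 < j2) (h2 : j2 < a + k) {t : Fin n}
    (ht1 : t ∈ f j1) (ht2 : t ∈ f j2) : False := by
  have h := hrest t j1 j2 h12 (lt_of_lt_of_le h2 hN) ht1 ht2
  have hc : ((Finset.Ioo j1 j2).filter (fun l => t ∉ f l)).card ≤ j2 - j1 - 1 := by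
    calc ((Finset.Ioo j1 j2).filter (fun l => t ∉ f l)).card
        ≤ (Finset.Ioo j1 j2).card := Finset.card_filter_le _ _
      _ = j2 - j1 - 1 := Nat.card_Ioo j1 j2
  omega

lemma missing_team {k N : ℕ} (hk : 1 ≤ k) (f : ℕ → Sym2 (Fin (2*k+1)))
    (hdiag : ∀ i, i < N → ¬ (f i).IsDiag)
    (hrest : hasRest (2*k+1) N f (k-1)) {a : ℕ} (hN : a + k ≤ N) :
    ∃ t : Fin (2*k+1), (∀ l, a ≤ l → l < a + k → t ∉ f l) ∧
      ∀ t' : Fin (2*k+1), (∀ l, a ≤ l → l < a + k → t' ∉ f l) → t' = t := by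
  set S := (Finset.Ico a (a+k)).biUnion (fun l => Finset.univ.filter (fun t => t ∈ f l)) with hS
  have hcard : S.card = 2 * k := by
    rw [Finset.card_biUnion]
    · rw [Finset.sum_congr rfl (fun l hl => mem_card_two (f l) (hdiag l
        (by rw [Finset.mem_Ico] at hl; omega)))]
      rw [Finset.sum_const, Nat.card_Ico, smul_eq_mul]
      omega
    · intro j1 hj1 j2 hj2 hne
      rw [Finset.mem_coe, Finset.mem_Ico] at hj1 hj2
      rw [Function.onFun, Finset.disjoint_left]
      intro t ht1 ht2
      simp only [Finset.mem_filter, Finset.mem_univ, true_and] at ht1 ht2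
      rcases lt_or_gt_of_ne hne with h | h
      · exact window_disjoint hk f hrest hN hj1.1 h hj2.2 ht1 ht2
      · exact window_disjoint hk f hrest hN hj2.1 h hj1.2 ht2 ht1
  have hcompl : Sᶜ.card = 1 := by
    rw [Finset.card_compl, hcard, Fintype.card_fin]
    omega
  rw [Finset.card_eq_one] at hcompl
  obtain ⟨t, ht⟩ := hcompl
  have key : ∀ u : Fin (2*k+1), (∀ l, a ≤ l → l < a + k → u ∉ f l) ↔ u = t := by
    intro u
    have h1 : u ∈ Sᶜ ↔ u = t := by rw [ht]; simp
    rw [Finset.mem_compl, hS, Finset.mem_biUnion] at h1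
    push_neg at h1
    simp only [Finset.mem_Ico, Finset.mem_filter, Finset.mem_univ, true_and] at h1
    constructor
    · intro h; exact h1.mp (fun l hl => h l hl.1 hl.2)
    · intro h l hla hlk; exact h1.mpr h l ⟨hla, hlk⟩
  exact ⟨t, (key t).mpr rfl, fun t' h => (key t').mp h⟩
theorem stmt3 (k : ℕ) (hk : 1 ≤ k) (f : ℕ → Sym2 (Fin (2*k+1)))
    (hf : isSchedule (2*k+1) ((2*k+1)*(2*k)/2) f)
    (hrest : hasRest (2*k+1) ((2*k+1)*(2*k)/2) f (k-1)) :
    ∀ i, k ≤ i → i < ((2*k+1)*(2*k)/2) →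
      ∃ t u : Fin (2*k+1), f i = Sym2.mk t u ∧
        (∀ l, i - k ≤ l → l < i → t ∉ f l) ∧
        (∀ t' : Fin (2*k+1), (∀ l, i - k ≤ l → l < i → t' ∉ f l) → t' = t) ∧
        u ∈ f (i - k) := by
  obtain ⟨hdiag, huniq⟩ := hf
  intro i hki hiN
  obtain ⟨t0, ht0, ht0u⟩ := missing_team hk f hdiag hrest (a := i - k)
    (show i - k + k ≤ (2*k+1)*(2*k)/2 by omega)
  have hw : i - k + k = i := by omega
  rw [hw] at ht0 ht0u
  have hmid : ∀ t : Fin (2*k+1), t ∈ f i → ∀ l, i - k < l → l < i → t ∉ f l := by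
    intro t hti l hl1 hl2 htl
    exact window_disjoint hk f hrest (a := i - k + 1)
      (show i - k + 1 + k ≤ (2*k+1)*(2*k)/2 by omega)
      (by omega) hl2 (by omega) htl hti
  have hother : ∀ t : Fin (2*k+1), t ∈ f i → t ≠ t0 → t ∈ f (i - k) := by
    intro t hti htne
    by_contra h
    refine htne (ht0u t (fun l hl1 hl2 => ?_))
    rcases Nat.eq_or_lt_of_le hl1 with h' | h'
    · rw [← h']; exact h
    · exact hmid t hti l h' hl2
  obtain ⟨x, y, hxy⟩ := sym2_exists (f i)
  have hne : x ≠ y := by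
    have hd := hdiag i hiN; rw [hxy, Sym2.mk_isDiag_iff] at hd; exact hd
  have hxmem : x ∈ f i := by rw [hxy]; exact Sym2.mem_mk_left x y
  have hymem : y ∈ f i := by rw [hxy]; exact Sym2.mem_mk_right x y
  have hik : i - k < i := by omega
  have ht0i : t0 ∈ f i := by
    by_contra h
    have hx : x ≠ t0 := fun e => h (e ▸ hxmem)
    have hy : y ≠ t0 := fun e => h (e ▸ hymem)
    have hxk := hother x hxmem hx
    have hyk := hother y hymem hy
    have hfk : f (i - k) = s(x, y) := (Sym2.mem_and_mem_iff hne).mp ⟨hxk, hyk⟩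
    obtain ⟨j, _, hju⟩ := huniq (s(x, y)) (by rw [Sym2.mk_isDiag_iff]; exact hne)
    have h1 := hju (i - k) ⟨lt_trans hik hiN, hfk⟩
    have h2 := hju i ⟨hiN, hxy⟩
    omega
  have ht0xy : t0 = x ∨ t0 = y := by rw [hxy] at ht0i; exact Sym2.mem_iff.mp ht0i
  rcases ht0xy with h | h
  · refine ⟨t0, y, by rw [hxy, h], fun l hl1 hl2 => ht0 l hl1 hl2, ht0u, ?_⟩
    exact hother y hymem (fun e => hne (h ▸ e ▸ rfl))
  · refine ⟨t0, x, by rw [hxy, h, Sym2.eq_swap], fun l hl1 hl2 => ht0 l hl1 hl2, ht0u, ?_⟩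
    exact hother x hxmem (fun e => hne (e ▸ h ▸ rfl))
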